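/- Let U₁,…,U_k be measurable non-null subsets of [0,1] with k < 2^(m/4) (m ≥ 25), and for each 1 ≤ i ≤ m let V_i^−, V_i^+ be the subsets of [0,1] corresponding to parts of W_CF^m whose vectors have i-th coordinate −1 and +1 respectively. Define S_t = ∑_{i=1}^m |U_t ∩ V_i^−|·|U_t ∩ V_i^+|. If |U_t| > 2^(-m/3), then S_t ≥ |U_t|²·m/32. -/

import Mathlib

open MeasureTheory

open Finset

/-- The ±1 vector associated with the part of `[0,1)` containing `x`, when `[0,1)` is
divided into `2^m` parts of equal length indexed by vectors in `{-1,+1}^m`. -/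
noncomputable def cfVec (m : ℕ) (x : ℝ) : Fin m → ℝ :=
  fun i => if Nat.testBit ⌊x * 2 ^ m⌋₊ i then 1 else -1

/-- The Conlon–Fox step graphon: the value between the parts indexed by `u` and `u'` is
`1/2 + ⟨u,u'⟩/(4√m)` truncated to `[0,1]`. -/
noncomputable def WCF (m : ℕ) (x y : ℝ) : ℝ :=
  max 0 (min 1 (1/2 + (∑ i : Fin m, cfVec m x i * cfVec m y i) / (4 * Real.sqrt m)))

/-- The (unnormalized) density between `A` and `B` in the graphon `W`. -/
noncomputable def graphonDensity (W : ℝ → ℝ → ℝ) (A B : Set ℝ) : ℝ :=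
  ∫ p in A ×ˢ B, W p.1 p.2

/-- `U` is a partition of `[0,1]` into `k` measurable non-null parts that is
weak `ε`-regular for the graphon `W`. -/
def IsWeakRegularPartition (W : ℝ → ℝ → ℝ) (ε : ℝ) (k : ℕ) (U : Fin k → Set ℝ) : Prop :=
  (∀ i, MeasurableSet (U i)) ∧ (∀ i, U i ⊆ Set.Icc 0 1) ∧
  (∀ i, 0 < (volume (U i)).toReal) ∧
  Pairwise (Function.onFun Disjoint U) ∧ (⋃ i, U i) = Set.Icc (0:ℝ) 1 ∧
  ∀ A B : Set ℝ, MeasurableSet A → MeasurableSet B →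
    A ⊆ Set.Icc 0 1 → B ⊆ Set.Icc 0 1 →
    |graphonDensity W A B - ∑ i, ∑ j,
      graphonDensity W (U i) (U j) / ((volume (U i)).toReal * (volume (U j)).toReal)
        * (volume (U i ∩ A)).toReal * (volume (U j ∩ B)).toReal| ≤ ε

/-- The set `V_i^s`: points of `[0,1)` lying in parts whose vector has `i`-th
coordinate `+1` (for `s = true`) or `-1` (for `s = false`). -/
def cfPart (m : ℕ) (i : Fin m) (s : Bool) : Set ℝ :=
  {x ∈ Set.Ico (0:ℝ) 1 | Nat.testBit ⌊x * 2^m⌋₊ i = s}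


/-- Sum of binomial coefficients up to `m/8`. -/
def cfN (m : ℕ) : ℕ := ∑ j ∈ Finset.range (m/8 + 1), m.choose j

lemma pascal_sum (m K : ℕ) :
    ∑ j ∈ range (K+1), (m+1).choose j
      = ∑ j ∈ range (K+1), m.choose j + ∑ j ∈ range K, m.choose j := by
  induction K with
  | zero => simp
  | succ K ih =>
      have e1 : ∑ j ∈ range (K+1+1), (m+1).choose j
          = (∑ j ∈ range (K+1), (m+1).choose j) + (m+1).choose (K+1) :=
        sum_range_succ _ _
      have e2 : ∑ j ∈ range (K+1+1), m.choose j
          = (∑ j ∈ range (K+1), m.choose j) + m.choose (K+1) := sum_range_succ _ _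
      have e3 : ∑ j ∈ range (K+1), m.choose j
          = (∑ j ∈ range K, m.choose j) + m.choose K := sum_range_succ _ _
      have h := Nat.choose_succ_succ m K
      simp only [Nat.succ_eq_add_one] at h ih ⊢
      omega

lemma six_sum_le (M K : ℕ) (h : 8*K ≤ M) :
    6 * ∑ j ∈ range K, M.choose j ≤ M.choose K := by
  induction K with
  | zero => simp
  | succ K ih =>
      have hK := ih (by omega)
      have h1 : M.choose (K+1) * (K+1) = M.choose K * (M - K) := Nat.choose_succ_right_eq M K
      have key : 7 * M.choose K ≤ M.choose (K+1) := by
        have h2 : 7 * (K+1) ≤ M - K := by omega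
        have h3 : M.choose K * (7 * (K+1)) ≤ M.choose K * (M - K) :=
          Nat.mul_le_mul_left _ h2
        rw [← h1] at h3
        have h4 : 7 * M.choose K * (K+1) ≤ M.choose (K+1) * (K+1) := by
          calc 7 * M.choose K * (K+1) = M.choose K * (7 * (K+1)) := by ring
          _ ≤ M.choose (K+1) * (K+1) := h3
        exact Nat.le_of_mul_le_mul_right h4 (by omega)
      rw [sum_range_succ, Nat.mul_add]
      omega

lemma cfN_stepA (m : ℕ) (h : m % 8 ≠ 7) : 6 * cfN (m+1) ≤ 7 * cfN m := by
  have hd : (m+1)/8 = m/8 := by omega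
  have hC : m.choose (m/8) ≤ cfN m :=
    single_le_sum (f := fun j => m.choose j) (fun i _ => Nat.zero_le _)
      (self_mem_range_succ _)
  have h6 : 6 * ∑ j ∈ range (m/8), m.choose j ≤ m.choose (m/8) :=
    six_sum_le m (m/8) (by omega)
  have : cfN (m+1) = cfN m + ∑ j ∈ range (m/8), m.choose j := by
    unfold cfN; rw [hd]; exact pascal_sum m (m/8)
  omega

lemma cfN_stepB (m : ℕ) (h : m % 8 = 7) : cfN (m+1) ≤ 9 * cfN m := by
  have hd : (m+1)/8 = m/8 + 1 := by omega
  set k := m/8 with hk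
  have hm : m = 8*k + 7 := by omega
  have h1 : m.choose (k+1) * (k+1) = m.choose k * (m - k) := Nat.choose_succ_right_eq m k
  have h2 : m - k = 7 * (k+1) := by omega
  have h3 : m.choose (k+1) = 7 * m.choose k := by
    have : m.choose (k+1) * (k+1) = (7 * m.choose k) * (k+1) := by rw [h1, h2]; ring
    exact Nat.eq_of_mul_eq_mul_right (by omega) this
  have hC : m.choose k ≤ cfN m :=
    single_le_sum (f := fun j => m.choose j) (fun i _ => Nat.zero_le _)
      (self_mem_range_succ _)
  have hdec : cfN (m+1) = (cfN m + m.choose (k+1)) + cfN m := by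
    unfold cfN; rw [hd]
    have := pascal_sum m (k+1)
    rw [this, sum_range_succ (f := fun j => m.choose j) (n := k+1)]
  omega

lemma cfN_cube (m : ℕ) (hm : 25 ≤ m) : 512 * cfN m ^ 3 ≤ 4 ^ m := by
  suffices H : 512 * 5^(m%8) * cfN m ^ 3 ≤ 2^(m%8) * 4^m by
    have h5 : (2:ℕ)^(m%8) ≤ 5^(m%8) := Nat.pow_le_pow_left (by norm_num) _
    have : 5^(m%8) * (512 * cfN m ^3) ≤ 5^(m%8) * 4^m := by
      calc 5^(m%8) * (512 * cfN m ^3) = 512 * 5^(m%8) * cfN m ^3 := by ring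
      _ ≤ 2^(m%8) * 4^m := H
      _ ≤ 5^(m%8) * 4^m := Nat.mul_le_mul_right _ h5
    exact Nat.le_of_mul_le_mul_left this (Nat.pow_pos (by norm_num))
  induction m, hm using Nat.le_induction with
  | base =>
      have : cfN 25 = 2626 := by
        unfold cfN; rfl
      rw [this]; norm_num
  | succ n hn ih =>
      by_cases h7 : n % 8 = 7
      · have hmod : (n+1) % 8 = 0 := by omega
        rw [hmod]
        have hstep := cfN_stepB n h7
        have hcube : cfN (n+1)^3 ≤ 729 * cfN n ^3 := by
          calc cfN (n+1)^3 ≤ (9 * cfN n)^3 := Nat.pow_le_pow_left hstep 3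
          _ = 729 * cfN n ^3 := by ring
        rw [h7] at ih
        have key : 5^7 * (512 * 5^0 * cfN (n+1)^3) ≤ 5^7 * (2^0 * 4^(n+1)) := by
          calc 5^7 * (512 * 5^0 * cfN (n+1)^3) = 512 * 5^7 * cfN (n+1)^3 := by ring
          _ ≤ 512 * 5^7 * (729 * cfN n ^3) := Nat.mul_le_mul_left _ hcube
          _ = 729 * (512 * 5^7 * cfN n ^3) := by ring
          _ ≤ 729 * (2^7 * 4^n) := Nat.mul_le_mul_left _ ih
          _ ≤ 5^7 * (2^0 * 4^(n+1)) := by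
              have : (729 * 2^7 : ℕ) ≤ 5^7 * (2^0 * 4) := by norm_num
              calc 729 * (2^7 * 4^n) = (729 * 2^7) * 4^n := by ring
              _ ≤ (5^7 * (2^0 * 4)) * 4^n := Nat.mul_le_mul_right _ this
              _ = 5^7 * (2^0 * 4^(n+1)) := by ring
        exact Nat.le_of_mul_le_mul_left key (by norm_num)
      · have hmod : (n+1) % 8 = n % 8 + 1 := by omega
        rw [hmod]
        have hstep := cfN_stepA n h7
        have hcube : 216 * cfN (n+1)^3 ≤ 343 * cfN n ^3 := by
          have := Nat.pow_le_pow_left hstep 3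
          calc 216 * cfN (n+1)^3 = (6 * cfN (n+1))^3 := by ring
          _ ≤ (7 * cfN n)^3 := this
          _ = 343 * cfN n ^3 := by ring
        have key : 216 * (512 * 5^(n%8+1) * cfN (n+1)^3) ≤ 216 * (2^(n%8+1) * 4^(n+1)) := by
          calc 216 * (512 * 5^(n%8+1) * cfN (n+1)^3)
              = 512 * 5^(n%8+1) * (216 * cfN (n+1)^3) := by ring
          _ ≤ 512 * 5^(n%8+1) * (343 * cfN n ^3) := Nat.mul_le_mul_left _ hcube
          _ = 1715 * (512 * 5^(n%8) * cfN n ^3) := by ring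
          _ ≤ 1715 * (2^(n%8) * 4^n) := Nat.mul_le_mul_left _ ih
          _ ≤ 1728 * (2^(n%8) * 4^n) := Nat.mul_le_mul_right _ (by norm_num)
          _ = 216 * (2^(n%8+1) * 4^(n+1)) := by ring
        exact Nat.le_of_mul_le_mul_left key (by norm_num)

/-- Hamming distance between the lowest `m` bits of `n` and `n'`. -/
def hamm (m n n' : ℕ) : ℕ :=
  ((Finset.univ : Finset (Fin m)).filter
    (fun i => Nat.testBit n i.val ≠ Nat.testBit n' i.val)).card

lemma card_close (m k n : ℕ) :
    (((Finset.range (2^m)).filter (fun n' => hamm m n n' ≤ k)).card)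
      ≤ ∑ j ∈ Finset.range (k+1), m.choose j := by
  classical
  set f : ℕ → Finset (Fin m) :=
    fun n' => (Finset.univ : Finset (Fin m)).filter
      (fun i => Nat.testBit n i.val ≠ Nat.testBit n' i.val) with hf
  set T : Finset (Finset (Fin m)) :=
    (Finset.range (k+1)).biUnion (fun j => Finset.powersetCard j Finset.univ) with hT
  have hcard : ∀ a, (f a).card = hamm m n a := fun a => rfl
  have hmaps : ∀ a ∈ (Finset.range (2^m)).filter (fun n' => hamm m n n' ≤ k), f a ∈ T := by
    intro a ha
    rw [Finset.mem_filter] at ha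
    rw [hT, Finset.mem_biUnion]
    exact ⟨(f a).card, Finset.mem_range.2 (Nat.lt_succ_of_le ((hcard a) ▸ ha.2)),
      Finset.mem_powersetCard.2 ⟨Finset.subset_univ _, rfl⟩⟩
  have hinj : Set.InjOn f ((Finset.range (2^m)).filter (fun n' => hamm m n n' ≤ k)) := by
    intro a ha b hb hab
    simp only [Finset.coe_filter, Set.mem_setOf_eq, Finset.mem_range] at ha hb
    apply Nat.eq_of_testBit_eq
    intro i
    by_cases him : i < m
    · have h := Finset.ext_iff.1 hab ⟨i, him⟩
      simp only [hf, Finset.mem_filter, Finset.mem_univ, true_and] at h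
      revert h
      rcases Nat.testBit n i <;> rcases Nat.testBit a i <;> rcases Nat.testBit b i <;> simp
    · have h1 : a < 2^i := lt_of_lt_of_le ha.1 (Nat.pow_le_pow_right (by norm_num) (le_of_not_gt him))
      have h2 : b < 2^i := lt_of_lt_of_le hb.1 (Nat.pow_le_pow_right (by norm_num) (le_of_not_gt him))
      rw [Nat.testBit_lt_two_pow h1, Nat.testBit_lt_two_pow h2]
  calc (((Finset.range (2^m)).filter (fun n' => hamm m n n' ≤ k)).card)
      ≤ T.card := Finset.card_le_card_of_injOn f hmaps hinj
  _ ≤ ∑ j ∈ Finset.range (k+1), (Finset.powersetCard j (Finset.univ : Finset (Fin m))).card :=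
      Finset.card_biUnion_le
  _ = ∑ j ∈ Finset.range (k+1), m.choose j := by
      refine Finset.sum_congr rfl fun j _ => ?_
      rw [Finset.card_powersetCard, Finset.card_univ, Fintype.card_fin]

/-- The `n`-th dyadic subinterval of `[0,1)` of length `2^{-m}`. -/
def cfI (m n : ℕ) : Set ℝ := Set.Ico ((n:ℝ)/2^m) (((n:ℝ)+1)/2^m)

lemma mem_cfI {m n : ℕ} {x : ℝ} :
    x ∈ cfI m n ↔ (n:ℝ) ≤ x * 2^m ∧ x * 2^m < (n:ℝ) + 1 := by
  have h : (0:ℝ) < 2^m := by positivity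
  simp only [cfI, Set.mem_Ico, div_le_iff₀ h, lt_div_iff₀ h]

lemma cfI_floor {m n : ℕ} (hn : n < 2^m) {x : ℝ} :
    x ∈ cfI m n ↔ x ∈ Set.Ico (0:ℝ) 1 ∧ ⌊x * 2^m⌋₊ = n := by
  have h2 : (0:ℝ) < 2^m := by positivity
  rw [mem_cfI]
  constructor
  · rintro ⟨ha, hb⟩
    have hx0 : 0 ≤ x * 2^m := le_trans (by positivity) ha
    have hx0' : 0 ≤ x := le_of_mul_le_mul_right (by linarith) h2
    have hn' : (n:ℝ) + 1 ≤ 2^m := by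
      have : (n:ℝ) + 1 ≤ (2:ℝ)^m := by
        have := (Nat.cast_le (α := ℝ)).2 (Nat.succ_le_of_lt hn)
        push_cast at this
        simpa using this
      exact this
    have hx1 : x < 1 := by
      by_contra hcon
      push_neg at hcon
      have : (2:ℝ)^m ≤ x * 2^m := by nlinarith
      linarith
    refine ⟨⟨hx0', hx1⟩, ?_⟩
    rw [Nat.floor_eq_iff hx0]
    exact ⟨ha, hb⟩
  · rintro ⟨⟨hx0, hx1⟩, hfl⟩
    have hx0' : 0 ≤ x * 2^m := by positivity
    rw [Nat.floor_eq_iff hx0'] at hfl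
    exact hfl

lemma cf_decomp (m : ℕ) (P : ℕ → Prop) [DecidablePred P] :
    {x : ℝ | x ∈ Set.Ico (0:ℝ) 1 ∧ P ⌊x * 2^m⌋₊} =
      ⋃ n ∈ (Finset.range (2^m)).filter P, cfI m n := by
  ext x
  simp only [Set.mem_setOf_eq, Set.mem_iUnion, Finset.mem_filter, Finset.mem_range,
    exists_prop]
  constructor
  · rintro ⟨⟨hx0, hx1⟩, hP⟩
    have hfl : ⌊x * 2^m⌋₊ < 2^m := by
      apply Nat.floor_lt (by positivity) |>.2
      push_cast
      calc x * 2^m < 1 * 2^m := by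
            apply mul_lt_mul_of_pos_right hx1 (by positivity)
      _ = 2^m := one_mul _
    refine ⟨⌊x * 2^m⌋₊, ⟨hfl, hP⟩, ?_⟩
    rw [cfI_floor hfl]
    exact ⟨⟨hx0, hx1⟩, rfl⟩
  · rintro ⟨n, ⟨hn, hP⟩, hx⟩
    rw [cfI_floor hn] at hx
    exact ⟨hx.1, hx.2 ▸ hP⟩

lemma cfI_disjoint (m : ℕ) : Set.PairwiseDisjoint (Set.univ : Set ℕ) (cfI m) := by
  intro a _ b _ hab
  have h2 : (0:ℝ) < 2^m := by positivity
  refine Set.disjoint_left.2 fun x hxa hxb => hab ?_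
  rw [mem_cfI] at hxa hxb
  rcases hxa with ⟨ha1, ha2⟩; rcases hxb with ⟨hb1, hb2⟩
  have h1 : (a:ℝ) < (b:ℝ) + 1 := lt_of_le_of_lt ha1 hb2
  have h2' : (b:ℝ) < (a:ℝ) + 1 := lt_of_le_of_lt hb1 ha2
  have h1' : a < b + 1 := by exact_mod_cast h1
  have h2'' : b < a + 1 := by exact_mod_cast h2' 
  omega

lemma vol_cfI (m n : ℕ) : volume (cfI m n) = ENNReal.ofReal (((2:ℝ)^m)⁻¹) := by
  rw [cfI, Real.volume_Ico]
  congr 1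
  field_simp
  ring

lemma vol_decomp {m : ℕ} {A : Set ℝ} (hA : MeasurableSet A) (S : Finset ℕ) :
    (volume (A ∩ ⋃ n ∈ S, cfI m n)).toReal
      = ∑ n ∈ S, (volume (A ∩ cfI m n)).toReal := by
  rw [Set.inter_iUnion₂]
  rw [measure_biUnion_finset
    (fun a _ b _ hab => ((cfI_disjoint m (Set.mem_univ a) (Set.mem_univ b) hab).mono
      Set.inter_subset_right Set.inter_subset_right))
    (fun n _ => hA.inter measurableSet_Ico)]
  apply ENNReal.toReal_sum
  intro n _
  exact ne_of_lt (lt_of_le_of_lt (measure_mono Set.inter_subset_right)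
    (by rw [vol_cfI]; exact ENNReal.ofReal_lt_top))


lemma core (m : ℕ) (hm : 25 ≤ m) (p : ℕ → ℝ) (hp0 : ∀ n, 0 ≤ p n)
    (hple : ∀ n, p n ≤ ((2:ℝ)^m)⁻¹) (μ : ℝ)
    (hμ : ∑ n ∈ Finset.range (2^m), p n = μ)
    (hμk : (2:ℝ)^(-(m:ℝ)/3) < μ) :
    μ^2 * m / 32 ≤ ∑ i : Fin m,
      (∑ n ∈ (Finset.range (2^m)).filter (fun n => Nat.testBit n i.val = false), p n)
        * (∑ n ∈ (Finset.range (2^m)).filter (fun n => Nat.testBit n i.val = true), p n) := by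
  classical
  set R := Finset.range (2^m) with hR
  set ε : ℕ → Fin m → ℝ := fun n i => if Nat.testBit n i.val then 1 else -1 with hε
  set a : Bool → Fin m → ℝ :=
    fun s i => ∑ n ∈ R.filter (fun n => Nat.testBit n i.val = s), p n with ha
  set d : Fin m → ℝ := fun i => ∑ n ∈ R, ε n i * p n with hd
  have hμ0 : 0 < μ := lt_trans (by positivity) hμk
  -- a false + a true = μ
  have h1 : ∀ i, a false i + a true i = μ := by
    intro i
    have hfilter : R.filter (fun n => ¬ (Nat.testBit n i.val = false))
        = R.filter (fun n => Nat.testBit n i.val = true) := by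
      apply Finset.filter_congr; intro n _; simp
    rw [ha]
    simp only
    rw [← hfilter, Finset.sum_filter_add_sum_filter_not R _ p, hμ]
  -- d = a true - a false
  have h2 : ∀ i, d i = a true i - a false i := by
    intro i
    have hsplit := Finset.sum_filter_add_sum_filter_not R
      (fun n => Nat.testBit n i.val = true) (fun n => ε n i * p n)
    have hfilter : R.filter (fun n => ¬ (Nat.testBit n i.val = true))
        = R.filter (fun n => Nat.testBit n i.val = false) := by
      apply Finset.filter_congr; intro n _; simp
    have e1 : ∑ n ∈ R.filter (fun n => Nat.testBit n i.val = true), ε n i * p n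
        = a true i := by
      apply Finset.sum_congr rfl
      intro n hn
      rw [Finset.mem_filter] at hn
      rw [hε]; simp only [hn.2, if_true, one_mul]
    have e2 : ∑ n ∈ R.filter (fun n => ¬(Nat.testBit n i.val = true)), ε n i * p n
        = - a false i := by
      rw [hfilter, ha]
      simp only
      rw [← Finset.sum_neg_distrib]
      apply Finset.sum_congr rfl
      intro n hn
      rw [Finset.mem_filter] at hn
      rw [hε]; simp only [hn.2, Bool.false_eq_true, if_false]; ring
    rw [hd]
    simp only
    rw [← hsplit, e1, e2]
    ring
  -- inner product formula
  set e : ℕ → ℕ → ℝ := fun n n' => ∑ i : Fin m, ε n i * ε n' i with he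
  have h4 : ∀ n n', e n n' = (m:ℝ) - 2 * (hamm m n n' : ℝ) := by
    intro n n'
    have term : ∀ i : Fin m, ε n i * ε n' i
        = if Nat.testBit n i.val = Nat.testBit n' i.val then (1:ℝ) else -1 := by
      intro i
      rcases Bool.eq_false_or_eq_true (Nat.testBit n i.val) with hb1 | hb1 <;>
        rcases Bool.eq_false_or_eq_true (Nat.testBit n' i.val) with hb2 | hb2 <;>
        simp [hε, hb1, hb2]
    have hcards := Finset.card_filter_add_card_filter_not
      (s := (Finset.univ : Finset (Fin m)))
      (p := fun i => Nat.testBit n i.val = Nat.testBit n' i.val)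
    have hcard_univ : (Finset.univ : Finset (Fin m)).card = m := by
      rw [Finset.card_univ, Fintype.card_fin]
    have hhamm : ((Finset.univ : Finset (Fin m)).filter
        (fun i => ¬ (Nat.testBit n i.val = Nat.testBit n' i.val))).card = hamm m n n' := rfl
    rw [he]
    simp only
    calc ∑ i : Fin m, ε n i * ε n' i
        = ∑ i : Fin m, (if Nat.testBit n i.val = Nat.testBit n' i.val then (1:ℝ) else -1) :=
          Finset.sum_congr rfl (fun i _ => term i)
    _ = ∑ i ∈ Finset.univ.filter (fun i : Fin m => Nat.testBit n i.val = Nat.testBit n' i.val),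
          (if Nat.testBit n i.val = Nat.testBit n' i.val then (1:ℝ) else -1)
        + ∑ i ∈ Finset.univ.filter (fun i : Fin m => ¬(Nat.testBit n i.val = Nat.testBit n' i.val)),
          (if Nat.testBit n i.val = Nat.testBit n' i.val then (1:ℝ) else -1) :=
        (Finset.sum_filter_add_sum_filter_not _ _ _).symm
    _ = ∑ i ∈ Finset.univ.filter (fun i : Fin m => Nat.testBit n i.val = Nat.testBit n' i.val),
          (1:ℝ)
        + ∑ i ∈ Finset.univ.filter (fun i : Fin m => ¬(Nat.testBit n i.val = Nat.testBit n' i.val)),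
          (-1:ℝ) := by
        congr 1
        · apply Finset.sum_congr rfl; intro i hi
          rw [Finset.mem_filter] at hi; rw [if_pos hi.2]
        · apply Finset.sum_congr rfl; intro i hi
          rw [Finset.mem_filter] at hi; rw [if_neg hi.2]
    _ = ((Finset.univ.filter (fun i : Fin m => Nat.testBit n i.val = Nat.testBit n' i.val)).card : ℝ)
        - ((Finset.univ.filter (fun i : Fin m => ¬(Nat.testBit n i.val = Nat.testBit n' i.val))).card : ℝ) := by
        rw [Finset.sum_const, Finset.sum_const]
        simp only [nsmul_eq_mul, mul_one, mul_neg_one]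
        ring
    _ = (m:ℝ) - 2 * (hamm m n n' : ℝ) := by
        rw [hhamm]
        have : ((Finset.univ.filter (fun i : Fin m => Nat.testBit n i.val = Nat.testBit n' i.val)).card : ℝ)
            = (m:ℝ) - (hamm m n n' : ℝ) := by
          rw [← hhamm]
          have := hcards
          rw [hcard_univ] at this
          have h' : ((Finset.univ.filter (fun i : Fin m => Nat.testBit n i.val = Nat.testBit n' i.val)).card : ℝ)
              + ((Finset.univ.filter (fun i : Fin m => ¬(Nat.testBit n i.val = Nat.testBit n' i.val))).card : ℝ)
              = (m : ℝ) := by exact_mod_cast congrArg (Nat.cast : ℕ → ℝ) this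
          linarith
        rw [this]
        ring
  -- expansion of sum of squares
  have h3 : ∑ i : Fin m, d i ^ 2
      = ∑ n ∈ R, ∑ n' ∈ R, e n n' * (p n * p n') := by
    have step1 : ∀ i : Fin m, d i ^ 2
        = ∑ n ∈ R, ∑ n' ∈ R, (ε n i * ε n' i) * (p n * p n') := by
      intro i
      rw [hd]
      simp only
      rw [sq, Finset.sum_mul_sum]
      apply Finset.sum_congr rfl; intro n _
      apply Finset.sum_congr rfl; intro n' _
      ring
    calc ∑ i : Fin m, d i ^ 2
        = ∑ i : Fin m, ∑ n ∈ R, ∑ n' ∈ R, (ε n i * ε n' i) * (p n * p n') :=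
          Finset.sum_congr rfl (fun i _ => step1 i)
    _ = ∑ n ∈ R, ∑ i : Fin m, ∑ n' ∈ R, (ε n i * ε n' i) * (p n * p n') :=
          Finset.sum_comm
    _ = ∑ n ∈ R, ∑ n' ∈ R, ∑ i : Fin m, (ε n i * ε n' i) * (p n * p n') :=
          Finset.sum_congr rfl (fun n _ => Finset.sum_comm)
    _ = ∑ n ∈ R, ∑ n' ∈ R, e n n' * (p n * p n') := by
          apply Finset.sum_congr rfl; intro n _
          apply Finset.sum_congr rfl; intro n' _
          rw [he]
          simp only
          rw [Finset.sum_mul]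
  -- numeric: cfN bound
  set k := m / 8 with hk
  have hm25 : (25:ℝ) ≤ (m:ℝ) := by exact_mod_cast hm
  have hkle : (k:ℝ) ≤ (m:ℝ)/8 := by rw [hk]; exact_mod_cast Nat.cast_div_le
  have hkge : (m:ℝ) - 7 ≤ 8 * (k:ℝ) := by
    have h7 : m ≤ 8 * k + 7 := by omega
    have h7' := (Nat.cast_le (α := ℝ)).2 h7
    push_cast at h7'; linarith
  have h2m : (0:ℝ) < 2^m := by positivity
  have hNle : (cfN m : ℝ) * ((2:ℝ)^m)⁻¹ ≤ (2:ℝ)^(-(m:ℝ)/3) / 8 := by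
    set c : ℝ := (2:ℝ)^(-(m:ℝ)/3) with hc
    have hc0 : 0 < c := Real.rpow_pos_of_pos (by norm_num) _
    have hcube : ((8:ℝ) * (cfN m : ℝ))^3 ≤ (c * 2^m)^3 := by
      have hL : ((8:ℝ) * (cfN m : ℝ))^3 = ((512 * cfN m ^3 : ℕ) : ℝ) := by push_cast; ring
      have hR : (c * 2^m)^3 = ((4^m : ℕ) : ℝ) := by
        have e1 : c^(3:ℕ) = (2:ℝ)^(-(m:ℝ)) := by
          rw [← Real.rpow_natCast c 3, hc, ← Real.rpow_mul (by norm_num : (0:ℝ) ≤ 2)]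
          congr 1
          push_cast; ring
        have e2 : ((2:ℝ)^m)^(3:ℕ) = (2:ℝ)^((3*m : ℕ)) := by
          rw [← pow_mul, Nat.mul_comm]
        have e3 : (2:ℝ)^((3*m:ℕ)) = (2:ℝ)^(((3*m:ℕ)):ℝ) := (Real.rpow_natCast 2 _).symm
        rw [mul_pow, e1, e2, e3, ← Real.rpow_add (by norm_num : (0:ℝ) < 2)]
        have e4 : -(m:ℝ) + ((3*m:ℕ):ℝ) = ((2*m:ℕ):ℝ) := by push_cast; ring
        rw [e4, Real.rpow_natCast]
        push_cast
        rw [pow_mul]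
        norm_num
      rw [hL, hR]
      exact_mod_cast cfN_cube m hm
    have h8N : (8:ℝ) * (cfN m : ℝ) ≤ c * 2^m :=
      le_of_pow_le_pow_left₀ (by norm_num) (by positivity) hcube
    rw [inv_eq_one_div, mul_one_div, div_le_div_iff₀ h2m (by norm_num : (0:ℝ) < 8)]
    linarith
  have hNleμ : (cfN m : ℝ) * ((2:ℝ)^m)⁻¹ ≤ μ / 8 := le_trans hNle (by linarith)
  set F : ℝ := (m:ℝ) - 2*((k:ℝ)+1) with hF
  have hF0 : 0 ≤ F := by rw [hF]; linarith
  have hFle : F ≤ 3/4 * (m:ℝ) := by rw [hF]; linarith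
  have hcfN : (cfN m : ℕ) = ∑ j ∈ Finset.range (k+1), m.choose j := by rw [hk]; rfl
  have hclose : ∀ n, ∑ n' ∈ R.filter (fun n' => hamm m n n' ≤ k), p n'
      ≤ (cfN m : ℝ) * ((2:ℝ)^m)⁻¹ := by
    intro n
    have hcard : ((R.filter (fun n' => hamm m n n' ≤ k)).card : ℝ) ≤ (cfN m : ℝ) := by
      have := card_close m k n
      rw [← hcfN] at this
      exact_mod_cast this
    calc ∑ n' ∈ R.filter (fun n' => hamm m n n' ≤ k), p n'
        ≤ (R.filter (fun n' => hamm m n n' ≤ k)).card • ((2:ℝ)^m)⁻¹ :=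
          Finset.sum_le_card_nsmul _ _ _ (fun x _ => hple x)
    _ = ((R.filter (fun n' => hamm m n n' ≤ k)).card : ℝ) * ((2:ℝ)^m)⁻¹ := nsmul_eq_mul _ _
    _ ≤ (cfN m : ℝ) * ((2:ℝ)^m)⁻¹ := mul_le_mul_of_nonneg_right hcard (by positivity)
  have he_le : ∀ n n', e n n' ≤ (m:ℝ) := by
    intro n n'
    rw [h4]
    have : (0:ℝ) ≤ (hamm m n n' : ℝ) := Nat.cast_nonneg _
    linarith
  have he_far : ∀ n n', ¬ (hamm m n n' ≤ k) → e n n' ≤ F := by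
    intro n n' hfar
    rw [h4, hF]
    have : (k:ℝ) + 1 ≤ (hamm m n n' : ℝ) := by
      exact_mod_cast Nat.succ_le_of_lt (Nat.lt_of_not_le hfar)
    linarith
  set B : ℝ := (m:ℝ) * ((cfN m : ℝ) * ((2:ℝ)^m)⁻¹) + F * μ with hB
  have hinner : ∀ n, ∑ n' ∈ R, e n n' * p n' ≤ B := by
    intro n
    rw [← Finset.sum_filter_add_sum_filter_not R (fun n' => hamm m n n' ≤ k)
      (fun n' => e n n' * p n'), hB]
    have c1 : ∑ n' ∈ R.filter (fun n' => hamm m n n' ≤ k), e n n' * p n'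
        ≤ (m:ℝ) * ((cfN m : ℝ) * ((2:ℝ)^m)⁻¹) := by
      calc ∑ n' ∈ R.filter (fun n' => hamm m n n' ≤ k), e n n' * p n'
          ≤ ∑ n' ∈ R.filter (fun n' => hamm m n n' ≤ k), (m:ℝ) * p n' :=
            Finset.sum_le_sum (fun n' _ => mul_le_mul_of_nonneg_right (he_le n n') (hp0 n'))
      _ = (m:ℝ) * ∑ n' ∈ R.filter (fun n' => hamm m n n' ≤ k), p n' := by
            rw [Finset.mul_sum]
      _ ≤ (m:ℝ) * ((cfN m:ℝ) * ((2:ℝ)^m)⁻¹) :=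
            mul_le_mul_of_nonneg_left (hclose n) (Nat.cast_nonneg m)
    have c2 : ∑ n' ∈ R.filter (fun n' => ¬ hamm m n n' ≤ k), e n n' * p n' ≤ F * μ := by
      calc ∑ n' ∈ R.filter (fun n' => ¬ hamm m n n' ≤ k), e n n' * p n'
          ≤ ∑ n' ∈ R.filter (fun n' => ¬ hamm m n n' ≤ k), F * p n' :=
            Finset.sum_le_sum (fun n' hn' =>
              mul_le_mul_of_nonneg_right (he_far n n' (Finset.mem_filter.1 hn').2) (hp0 n'))
      _ = F * ∑ n' ∈ R.filter (fun n' => ¬ hamm m n n' ≤ k), p n' := by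
            rw [Finset.mul_sum]
      _ ≤ F * μ := by
            apply mul_le_mul_of_nonneg_left _ hF0
            rw [← hμ]
            exact Finset.sum_le_sum_of_subset_of_nonneg (Finset.filter_subset _ _)
              (fun x hx _ => hp0 x)
    linarith
  have hD : ∑ i : Fin m, d i ^2 ≤ B * μ := by
    rw [h3]
    calc ∑ n ∈ R, ∑ n' ∈ R, e n n' * (p n * p n')
        = ∑ n ∈ R, p n * (∑ n' ∈ R, e n n' * p n') := by
          apply Finset.sum_congr rfl; intro n _
          rw [Finset.mul_sum]
          apply Finset.sum_congr rfl; intro n' _; ring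
    _ ≤ ∑ n ∈ R, p n * B :=
        Finset.sum_le_sum (fun n _ => mul_le_mul_of_nonneg_left (hinner n) (hp0 n))
    _ = B * μ := by rw [← Finset.sum_mul, hμ]; ring
  have hBle : B ≤ 7/8 * (m:ℝ) * μ := by
    rw [hB]
    have t1 : (m:ℝ) * ((cfN m : ℝ) * ((2:ℝ)^m)⁻¹) ≤ (m:ℝ) * (μ/8) :=
      mul_le_mul_of_nonneg_left hNleμ (Nat.cast_nonneg m)
    have t2 : F * μ ≤ (3/4 * (m:ℝ)) * μ := mul_le_mul_of_nonneg_right hFle hμ0.le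
    linarith
  have hDle : ∑ i : Fin m, d i^2 ≤ 7/8 * (m:ℝ) * μ * μ :=
    le_trans hD (mul_le_mul_of_nonneg_right hBle hμ0.le)
  have hid : ∀ i : Fin m, μ^2 - d i^2 = 4 * (a false i * a true i) := by
    intro i
    rw [← h1 i, h2 i]; ring
  have hsum : ∑ i : Fin m, (μ^2 - d i^2) = (m:ℝ) * μ^2 - ∑ i : Fin m, d i^2 := by
    rw [Finset.sum_sub_distrib, Finset.sum_const, Finset.card_univ, Fintype.card_fin,
      nsmul_eq_mul]
  have hsum2 : ∑ i : Fin m, (μ^2 - d i ^2) = 4 * ∑ i : Fin m, a false i * a true i := by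
    rw [Finset.mul_sum]
    exact Finset.sum_congr rfl (fun i _ => hid i)
  have hgoal : (m:ℝ) * μ^2 - ∑ i : Fin m, d i^2 = 4 * ∑ i : Fin m, a false i * a true i := by
    rw [← hsum, hsum2]
  have hμsq : μ^2 = μ * μ := sq μ
  show μ^2 * (m:ℝ)/32 ≤ ∑ i : Fin m, a false i * a true i
  linarith

lemma Ico_eq_biUnion (m : ℕ) :
    Set.Ico (0:ℝ) 1 = ⋃ n ∈ Finset.range (2^m), cfI m n := by
  have h := cf_decomp m (fun _ => True)
  simpa [Set.Ico] using h

theorem stmt12 (m k : ℕ) (hm : 25 ≤ m) (hk : (k:ℝ) < 2^((m:ℝ)/4))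
    (U : Fin k → Set ℝ) (hmeas : ∀ t, MeasurableSet (U t))
    (hsub : ∀ t, U t ⊆ Set.Icc 0 1) (hnn : ∀ t, 0 < (volume (U t)).toReal)
    (t : Fin k) (ht : (2:ℝ)^(-(m:ℝ)/3) < (volume (U t)).toReal) :
    (volume (U t)).toReal^2 * m / 32 ≤
      ∑ i : Fin m, (volume (U t ∩ cfPart m i false)).toReal
        * (volume (U t ∩ cfPart m i true)).toReal := by
  classical
  set A := U t with hA
  have hAmeas : MeasurableSet A := hmeas t
  have hAsub : A ⊆ Set.Icc 0 1 := hsub t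
  set p : ℕ → ℝ := fun n => (volume (A ∩ cfI m n)).toReal with hp
  have hfin : ∀ n, volume (A ∩ cfI m n) ≠ ⊤ := by
    intro n
    exact ne_of_lt (lt_of_le_of_lt (measure_mono Set.inter_subset_right)
      (by rw [vol_cfI]; exact ENNReal.ofReal_lt_top))
  have hp0 : ∀ n, 0 ≤ p n := fun n => ENNReal.toReal_nonneg
  have hple : ∀ n, p n ≤ ((2:ℝ)^m)⁻¹ := by
    intro n
    have h1 : volume (A ∩ cfI m n) ≤ volume (cfI m n) :=
      measure_mono Set.inter_subset_right
    have h2 : (volume (cfI m n)).toReal = ((2:ℝ)^m)⁻¹ := by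
      rw [vol_cfI, ENNReal.toReal_ofReal (by positivity)]
    rw [hp]
    calc (volume (A ∩ cfI m n)).toReal
        ≤ (volume (cfI m n)).toReal :=
          ENNReal.toReal_mono (by rw [vol_cfI]; exact ENNReal.ofReal_ne_top) h1
    _ = ((2:ℝ)^m)⁻¹ := h2
  have hvolsplit : volume A = volume (A ∩ Set.Ico 0 1) := by
    apply le_antisymm
    · have hsub1 : A ⊆ (A ∩ Set.Ico 0 1) ∪ {1} := by
        intro x hx
        rcases hAsub hx with ⟨hx0, hx1⟩
        by_cases hx1' : x = 1
        · exact Or.inr (by simp [hx1'])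
        · exact Or.inl ⟨hx, hx0, lt_of_le_of_ne hx1 hx1'⟩
      calc volume A ≤ volume ((A ∩ Set.Ico 0 1) ∪ {1}) := measure_mono hsub1
      _ ≤ volume (A ∩ Set.Ico 0 1) + volume ({1} : Set ℝ) := measure_union_le _ _
      _ = volume (A ∩ Set.Ico 0 1) := by rw [Real.volume_singleton, add_zero]
    · exact measure_mono Set.inter_subset_left
  have hμ : ∑ n ∈ Finset.range (2^m), p n = (volume A).toReal := by
    rw [hp]
    have := vol_decomp (m := m) hAmeas (Finset.range (2^m))
    rw [← this, ← Ico_eq_biUnion m, ← hvolsplit]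
  have hcf : ∀ (i : Fin m) (s : Bool),
      (volume (A ∩ cfPart m i s)).toReal
        = ∑ n ∈ (Finset.range (2^m)).filter (fun n => Nat.testBit n i.val = s), p n := by
    intro i s
    have hdec : cfPart m i s
        = ⋃ n ∈ (Finset.range (2^m)).filter (fun n => Nat.testBit n i.val = s), cfI m n :=
      cf_decomp m (fun n => Nat.testBit n i.val = s)
    rw [hdec, vol_decomp hAmeas]
  have hcore := core m hm p hp0 hple (volume A).toReal hμ ht
  calc (volume A).toReal ^ 2 * m / 32
      ≤ ∑ i : Fin m,
        (∑ n ∈ (Finset.range (2^m)).filter (fun n => Nat.testBit n i.val = false), p n)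
          * (∑ n ∈ (Finset.range (2^m)).filter (fun n => Nat.testBit n i.val = true), p n) :=
        hcore
  _ = ∑ i : Fin m, (volume (A ∩ cfPart m i false)).toReal
        * (volume (A ∩ cfPart m i true)).toReal := by
      refine Finset.sum_congr rfl fun i _ => ?_
      rw [hcf i false, hcf i true]
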